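/- Let G be a simple graph with n vertices, m edges and first Zagreb index M₁(G). Then s_Q(G) ≥ (4/n)·sqrt(n·M₁(G) - 4m²). -/

import Mathlib

open Matrix

/-- The spread of a Hermitian real matrix: largest minus smallest eigenvalue. -/
noncomputable def spread {n : ℕ} {A : Matrix (Fin n) (Fin n) ℝ} (hA : A.IsHermitian) : ℝ :=
  (⨆ i, hA.eigenvalues i) - ⨅ i, hA.eigenvalues i

/-- The signless Laplacian matrix Q = D + A of a simple graph. -/
noncomputable def signlessLaplacian {n : ℕ} (G : SimpleGraph (Fin n)) [DecidableRel G.Adj] :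
    Matrix (Fin n) (Fin n) ℝ :=
  Matrix.diagonal (fun i => (G.degree i : ℝ)) + G.adjMatrix ℝ

lemma psd_shift {m : ℕ} {A : Matrix (Fin m) (Fin m) ℝ} (hA : A.IsHermitian)
    {a b : ℝ} (ha : ∀ i, a ≤ hA.eigenvalues i) (hb : ∀ i, hA.eigenvalues i ≤ b) :
    ((b • (1 : Matrix (Fin m) (Fin m) ℝ) - A) * (A - a • 1)).PosSemidef := by
  set U : Matrix (Fin m) (Fin m) ℝ := (hA.eigenvectorUnitary : Matrix (Fin m) (Fin m) ℝ) with hUdef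
  have hU : U * star U = 1 := mem_unitaryGroup_iff.mp hA.eigenvectorUnitary.2
  have hU' : star U * U = 1 := mem_unitaryGroup_iff'.mp hA.eigenvectorUnitary.2
  set D : Matrix (Fin m) (Fin m) ℝ := diagonal hA.eigenvalues with hDdef
  have hspec : A = U * D * star U := by
    have h := hA.spectral_theorem
    have : diagonal (RCLike.ofReal ∘ hA.eigenvalues) = D := by
      rw [hDdef]; congr 1
    rw [this] at h
    exact h
  have e1 : b • (1 : Matrix (Fin m) (Fin m) ℝ) - A = U * (b • 1 - D) * star U := by
    rw [hspec, Matrix.mul_sub, Matrix.sub_mul, Matrix.mul_smul, Matrix.mul_one,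
      Matrix.smul_mul, hU]
  have e2 : A - a • (1 : Matrix (Fin m) (Fin m) ℝ) = U * (D - a • 1) * star U := by
    rw [hspec, Matrix.mul_sub, Matrix.sub_mul, Matrix.mul_smul, Matrix.mul_one,
      Matrix.smul_mul, hU]
  have key : (b • (1 : Matrix (Fin m) (Fin m) ℝ) - A) * (A - a • 1)
      = U * ((b • 1 - D) * (D - a • 1)) * star U := by
    rw [e1, e2]
    simp only [Matrix.mul_assoc]
    rw [← Matrix.mul_assoc (star U) U, hU', Matrix.one_mul]
  have hdiag : (b • (1 : Matrix (Fin m) (Fin m) ℝ) - D) * (D - a • 1)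
      = diagonal (fun i => (b - hA.eigenvalues i) * (hA.eigenvalues i - a)) := by
    have h1 : b • (1 : Matrix (Fin m) (Fin m) ℝ) = diagonal (fun _ => b) := by
      ext i j; simp [Matrix.diagonal_apply, Matrix.one_apply, mul_ite]
    have h2 : a • (1 : Matrix (Fin m) (Fin m) ℝ) = diagonal (fun _ => a) := by
      ext i j; simp [Matrix.diagonal_apply, Matrix.one_apply, mul_ite]
    rw [h1, h2, hDdef, Matrix.diagonal_sub, Matrix.diagonal_sub, Matrix.diagonal_mul_diagonal]
  rw [key, hdiag]
  have hpsd : (diagonal (fun i => (b - hA.eigenvalues i) * (hA.eigenvalues i - a))).PosSemidef :=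
    Matrix.posSemidef_diagonal_iff.mpr fun i =>
      mul_nonneg (by linarith [hb i]) (by linarith [ha i])
  have := hpsd.mul_mul_conjTranspose_same U
  rwa [← Matrix.star_eq_conjTranspose] at this

theorem spread_Q_zagreb_lower_bound' {n : ℕ} (hn : 1 ≤ n)
    (G : SimpleGraph (Fin n)) [DecidableRel G.Adj]
    (hQ : (signlessLaplacian G).IsHermitian) :
    spread hQ ≥ (4 / (n : ℝ)) * Real.sqrt ((n : ℝ) * (∑ i, (G.degree i : ℝ) ^ 2)
      - 4 * (G.edgeFinset.card : ℝ) ^ 2) := by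
  have hnpos : (0 : ℝ) < n := by exact_mod_cast hn
  haveI : Nonempty (Fin n) := ⟨⟨0, hn⟩⟩
  set Q : Matrix (Fin n) (Fin n) ℝ := signlessLaplacian G with hQdef
  set a : ℝ := ⨅ i, hQ.eigenvalues i with hadef
  set b : ℝ := ⨆ i, hQ.eigenvalues i with hbdef
  have ha : ∀ i, a ≤ hQ.eigenvalues i := fun i =>
    ciInf_le (Set.Finite.bddBelow (Set.finite_range _)) i
  have hb : ∀ i, hQ.eigenvalues i ≤ b := fun i =>
    le_ciSup (Set.Finite.bddAbove (Set.finite_range _)) i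
  have hba : a ≤ b := le_trans (ha (Classical.arbitrary _)) (hb (Classical.arbitrary _))
  set e : Fin n → ℝ := fun _ => 1 with hedef
  have hpsd := (psd_shift hQ ha hb).dotProduct_mulVec_nonneg e
  -- the vector Q *ᵥ e has entries 2 * degree
  set Msum : ℝ := ∑ i, (G.degree i : ℝ) ^ 2 with hMdef
  set mm : ℝ := (G.edgeFinset.card : ℝ) with hmdef
  have hy : Q *ᵥ e = fun i => 2 * (G.degree i : ℝ) := by
    funext i
    simp only [hQdef, signlessLaplacian, Matrix.add_mulVec, Pi.add_apply,
      Matrix.mulVec_diagonal, hedef, SimpleGraph.adjMatrix_mulVec_apply]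
    simp [two_mul]
  have hsumdeg : ∑ i, (G.degree i : ℝ) = 2 * mm := by
    rw [hmdef]
    have h := SimpleGraph.sum_degrees_eq_twice_card_edges G
    have h2 : ((∑ i, G.degree i : ℕ) : ℝ) = ((2 * G.edgeFinset.card : ℕ) : ℝ) := by
      exact_mod_cast congrArg (Nat.cast : ℕ → ℝ) h
    push_cast at h2
    exact h2
  have hS1 : e ⬝ᵥ (Q *ᵥ e) = 4 * mm := by
    rw [hy]
    simp only [dotProduct, hedef, one_mul]
    rw [← Finset.mul_sum, hsumdeg]; ring
  have hS2 : (Q *ᵥ e) ⬝ᵥ (Q *ᵥ e) = 4 * Msum := by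
    rw [hy]
    simp only [dotProduct, hMdef, Finset.mul_sum]
    congr 1; funext i; ring
  have hC : e ⬝ᵥ e = (n : ℝ) := by
    simp [dotProduct, hedef]
  have hsym : e ᵥ* Q = Q *ᵥ e := by
    rw [← Matrix.mulVec_transpose]
    congr 1
  -- expand the PSD inequality
  have hexp : 0 ≤ b * (4 * mm) + a * (4 * mm) - a * b * n - 4 * Msum := by
    have hse : star e = e := by funext i; simp [hedef]
    rw [hse] at hpsd
    have hmv : ((b • (1 : Matrix (Fin n) (Fin n) ℝ) - Q) * (Q - a • 1)) *ᵥ e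
        = b • (Q *ᵥ e) - (a * b) • e - Q *ᵥ (Q *ᵥ e) + a • (Q *ᵥ e) := by
      rw [← Matrix.mulVec_mulVec, Matrix.sub_mulVec, Matrix.sub_mulVec,
        Matrix.smul_mulVec, Matrix.one_mulVec, Matrix.smul_mulVec,
        Matrix.one_mulVec, Matrix.mulVec_sub, Matrix.mulVec_smul]
      module
    rw [hmv] at hpsd
    rw [dotProduct_add, dotProduct_sub, dotProduct_sub, dotProduct_smul,
      dotProduct_smul, dotProduct_smul] at hpsd
    have hQ2 : e ⬝ᵥ (Q *ᵥ (Q *ᵥ e)) = (Q *ᵥ e) ⬝ᵥ (Q *ᵥ e) := by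
      rw [Matrix.dotProduct_mulVec, hsym]
    rw [hQ2, hS1, hS2, hC] at hpsd
    simp only [smul_eq_mul] at hpsd
    linarith
  -- final algebra
  have hspread : spread hQ = b - a := rfl
  rw [ge_iff_le, hspread]
  have key : Real.sqrt ((n : ℝ) * Msum - 4 * mm ^ 2) ≤ (n : ℝ) * (b - a) / 4 := by
    have h4 : (0 : ℝ) ≤ (n : ℝ) * (b - a) / 4 := by
      apply div_nonneg _ (by norm_num)
      exact mul_nonneg hnpos.le (by linarith)
    rw [show (n : ℝ) * (b - a) / 4 = Real.sqrt (((n : ℝ) * (b - a) / 4) ^ 2) from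
      (Real.sqrt_sq h4).symm]
    apply Real.sqrt_le_sqrt
    nlinarith [mul_nonneg hnpos.le hexp, sq_nonneg ((n : ℝ) * (a + b) - 8 * mm)]
  calc (4 / (n : ℝ)) * Real.sqrt ((n : ℝ) * Msum - 4 * mm ^ 2)
      ≤ (4 / (n : ℝ)) * ((n : ℝ) * (b - a) / 4) := by
        apply mul_le_mul_of_nonneg_left key (by positivity)
    _ = b - a := by field_simp
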